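/- Fix $p,r\in(0,1)$. The equation $-2\log\big(\sqrt{\pi}\big(\tfrac{1}{k}-\tfrac12\big)\big) = \log k + 2\log\tfrac{p}{(1-p)(1-r)}+\tfrac{2}{k}$ has a unique solution $k^*\in(0,2)$. -/
import Mathlib

private lemma hfun_mono :
    StrictMonoOn (fun k : ℝ => Real.log k - 2 * Real.log (2 - k) - 2 / k)
      (Set.Ioo (0 : ℝ) 2) := by
  intro x hx y hy hxy
  obtain ⟨hx0, hx2⟩ := hx
  obtain ⟨hy0, hy2⟩ := hy
  have h1 : Real.log x < Real.log y := Real.log_lt_log hx0 hxy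
  have h2 : Real.log (2 - y) < Real.log (2 - x) :=
    Real.log_lt_log (by linarith) (by linarith)
  have h3 : 2 / y < 2 / x := div_lt_div_of_pos_left (by norm_num) hx0 hxy
  dsimp only
  linarith

private lemma hfun_exists_unique (t : ℝ) :
    ∃! k : ℝ, k ∈ Set.Ioo (0 : ℝ) 2 ∧
      Real.log k - 2 * Real.log (2 - k) - 2 / k = t := by
  obtain ⟨a, ha0, hahalf, hloga⟩ :
      ∃ a : ℝ, 0 < a ∧ a ≤ 1 / 2 ∧ Real.log a ≤ t - 1 := by
    refine ⟨min (1 / 2) (Real.exp (t - 1)), lt_min (by norm_num) (Real.exp_pos _),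
      min_le_left _ _, ?_⟩
    have h1 : min (1 / 2) (Real.exp (t - 1)) ≤ Real.exp (t - 1) := min_le_right _ _
    have h2 := Real.log_le_log (lt_min (by norm_num) (Real.exp_pos _)) h1
    rwa [Real.log_exp] at h2
  obtain ⟨b, hb32, hb2, hlogb⟩ :
      ∃ b : ℝ, 3 / 2 ≤ b ∧ b < 2 ∧ Real.log (2 - b) ≤ -(t + 3) / 2 := by
    have hε0 : 0 < min (1 / 2) (Real.exp (-(t + 3) / 2)) :=
      lt_min (by norm_num) (Real.exp_pos _)
    have hεhalf : min (1 / 2) (Real.exp (-(t + 3) / 2)) ≤ 1 / 2 := min_le_left _ _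
    refine ⟨2 - min (1 / 2) (Real.exp (-(t + 3) / 2)), by linarith, by linarith, ?_⟩
    have h1 : 2 - (2 - min (1 / 2) (Real.exp (-(t + 3) / 2))) =
        min (1 / 2) (Real.exp (-(t + 3) / 2)) := by ring
    rw [h1]
    have h2 := Real.log_le_log hε0 (min_le_right (1 / 2) (Real.exp (-(t + 3) / 2)))
    rwa [Real.log_exp] at h2
  have hab : a < b := by linarith
  have hha : Real.log a - 2 * Real.log (2 - a) - 2 / a < t := by
    have h2 : (0 : ℝ) ≤ Real.log (2 - a) := Real.log_nonneg (by linarith)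
    have h3 : 0 < 2 / a := by positivity
    linarith
  have hhb : t < Real.log b - 2 * Real.log (2 - b) - 2 / b := by
    have h1 : (0 : ℝ) ≤ Real.log b := Real.log_nonneg (by linarith)
    have h2 : 2 / b ≤ 2 := by
      rw [div_le_iff₀ (by linarith : (0:ℝ) < b)]; linarith
    linarith
  have hcont : ContinuousOn
      (fun k : ℝ => Real.log k - 2 * Real.log (2 - k) - 2 / k) (Set.Icc a b) := by
    apply ContinuousOn.sub
    apply ContinuousOn.sub
    · exact Real.continuousOn_log.comp continuousOn_id
        (fun x hx => ne_of_gt (lt_of_lt_of_le ha0 hx.1))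
    · exact continuousOn_const.mul ((continuousOn_const.sub continuousOn_id).log
        (fun x hx => ne_of_gt (by linarith [hx.2] : (0:ℝ) < 2 - x)))
    · exact continuousOn_const.div continuousOn_id
        (fun x hx => ne_of_gt (lt_of_lt_of_le ha0 hx.1))
  have hmem : t ∈ Set.Ioo
      ((fun k : ℝ => Real.log k - 2 * Real.log (2 - k) - 2 / k) a)
      ((fun k : ℝ => Real.log k - 2 * Real.log (2 - k) - 2 / k) b) := ⟨hha, hhb⟩
  obtain ⟨k, hkmem, hkt⟩ := intermediate_value_Ioo hab.le hcont hmem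
  have hk02 : k ∈ Set.Ioo (0 : ℝ) 2 :=
    ⟨lt_of_lt_of_le ha0 hkmem.1.le, lt_trans hkmem.2 hb2⟩
  refine ⟨k, ⟨hk02, hkt⟩, ?_⟩
  rintro y ⟨hy02, hyt⟩
  exact hfun_mono.injOn hy02 hk02 (hyt.trans hkt.symm)

/-- The fixed-point equation for the asymptotic Type II MLE false positive
probability has a unique solution `k* ∈ (0,2)`. -/
theorem stmt19 (p r : ℝ) (hp : p ∈ Set.Ioo (0 : ℝ) 1) (hr : r ∈ Set.Ioo (0 : ℝ) 1) :
    ∃! k : ℝ, k ∈ Set.Ioo (0 : ℝ) 2 ∧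
      -2 * Real.log (Real.sqrt Real.pi * (1 / k - 1 / 2)) =
        Real.log k + 2 * Real.log (p / ((1 - p) * (1 - r))) + 2 / k := by
  obtain ⟨hp0, hp1⟩ := hp
  obtain ⟨hr0, hr1⟩ := hr
  have hequiv : ∀ k ∈ Set.Ioo (0 : ℝ) 2,
      ((-2 * Real.log (Real.sqrt Real.pi * (1 / k - 1 / 2)) =
        Real.log k + 2 * Real.log (p / ((1 - p) * (1 - r))) + 2 / k) ↔
      Real.log k - 2 * Real.log (2 - k) - 2 / k =
        2 * Real.log (p / ((1 - p) * (1 - r))) + Real.log Real.pi - 2 * Real.log 2) := by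
    intro k hk
    obtain ⟨hk0, hk2⟩ := hk
    have hne : (1 : ℝ) / k - 1 / 2 = (2 - k) / (2 * k) := by
      rw [div_sub_div _ _ (ne_of_gt hk0) two_ne_zero]
      congr 1 <;> ring
    have hpos : (0 : ℝ) < (2 - k) / (2 * k) :=
      div_pos (by linarith) (by linarith)
    have hlog : Real.log (Real.sqrt Real.pi * (1 / k - 1 / 2)) =
        Real.log Real.pi / 2 + (Real.log (2 - k) - (Real.log 2 + Real.log k)) := by
      rw [hne, Real.log_mul (by positivity) (ne_of_gt hpos),
        Real.log_sqrt Real.pi_pos.le,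
        Real.log_div (ne_of_gt (by linarith : (0:ℝ) < 2 - k)) (by positivity),
        Real.log_mul (by norm_num) (ne_of_gt hk0)]
    rw [hlog]
    constructor <;> intro heq <;> linarith
  obtain ⟨k, ⟨hk02, hkt⟩, huniq⟩ := hfun_exists_unique
    (2 * Real.log (p / ((1 - p) * (1 - r))) + Real.log Real.pi - 2 * Real.log 2)
  refine ⟨k, ⟨hk02, (hequiv k hk02).mpr hkt⟩, ?_⟩
  rintro y ⟨hy02, hyeq⟩
  exact huniq y ⟨hy02, (hequiv y hy02).mp hyeq⟩
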